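/- For every ω ∈ ℝ one has the identity √σ₁₁·sin(β − ω)·x̂(ω) + √σ₂₂·sin(ω)·ŷ(ω) = 2m·sin²((ω − θ)/2). (This is the exponential decay-rate identity of Proposition 10.3: in the wedge of angle β, the decay rate in direction ω of the saddle-point contribution equals 2|μ̃|·sin²((ω−θ)/2).) -/

import Mathlib

open Real

theorem stmt13
    (β θ m σ11 σ22 : ℝ)
    (hβ0 : 0 < β) (hβπ : β < Real.pi)
    (hm : 0 < m) (hσ11 : 0 < σ11) (hσ22 : 0 < σ22)
    (xh yh : ℝ → ℝ)
    (hxh : ∀ ω, xh ω = (2 * m / (Real.sqrt σ11 * Real.sin β)) *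
      Real.sin ((θ - ω) / 2) * Real.sin ((ω + θ) / 2))
    (hyh : ∀ ω, yh ω = (2 * m / (Real.sqrt σ22 * Real.sin β)) *
      Real.sin ((θ - ω) / 2) * Real.sin ((ω + θ - 2 * β) / 2)) :
    ∀ ω : ℝ,
      Real.sqrt σ11 * Real.sin (β - ω) * xh ω + Real.sqrt σ22 * Real.sin ω * yh ω =
        2 * m * Real.sin ((ω - θ) / 2) ^ 2 := by
  intro ω
  have hs : Real.sin β ≠ 0 := (Real.sin_pos_of_pos_of_lt_pi hβ0 hβπ).ne'
  have h1 : Real.sqrt σ11 ≠ 0 := (Real.sqrt_pos.mpr hσ11).ne'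
  have h2 : Real.sqrt σ22 ≠ 0 := (Real.sqrt_pos.mpr hσ22).ne'
  rw [hxh, hyh]
  rw [show (θ - ω) / 2 = θ/2 - ω/2 by ring,
      show (ω + θ) / 2 = ω/2 + θ/2 by ring,
      show (ω + θ - 2 * β) / 2 = (ω/2 + θ/2) - β by ring,
      show (ω - θ) / 2 = ω/2 - θ/2 by ring,
      show β - ω = β - (ω/2 + ω/2) by ring,
      show ω = ω/2 + ω/2 by ring]
  rw [show (ω/2 + ω/2)/2 = ω/2 by ring]
  simp only [Real.sin_add, Real.sin_sub, Real.cos_add, Real.cos_sub]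
  field_simp
  linear_combination (Real.sin β / 2 *
    (2 * Real.sin (θ/2) ^ 2 * Real.cos (ω/2) ^ 2 +
     2 * Real.cos (θ/2) ^ 2 * Real.sin (ω/2) ^ 2 -
     4 * Real.sin (θ/2) * Real.cos (θ/2) * Real.sin (ω/2) * Real.cos (ω/2))) *
    (Real.sin_sq_add_cos_sq (ω/2))
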